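/- The formal power series θ(z) = exp(Σ_{n≥1} σ(n)·z^n/n) over ℚ, where σ(n) = Σ_{d|n} d is the sum-of-divisors function, is not rational: there exist no polynomials p, q with rational coefficients, q with nonzero constant term, such that q(z)·θ(z) = p(z) as formal power series. -/

import Mathlib

open PowerSeries Finset

/-- The formal exponential `exp f = ∑_k f^k / k!` of a power series `f` over `ℚ`
(defined coefficientwise; for `f` with zero constant term only the terms with
`k ≤ n` contribute to the `n`-th coefficient). -/
noncomputable def expPS (f : PowerSeries ℚ) : PowerSeries ℚ :=
  PowerSeries.mk fun n =>
    ∑ k ∈ Finset.range (n + 1), PowerSeries.coeff (R := ℚ) n (f ^ k) / (Nat.factorial k : ℚ)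

/-- `θ(z) = exp (∑_{n ≥ 1} σ(n) zⁿ / n)`, where `σ(n) = ∑_{d ∣ n} d`. -/
noncomputable def theta : PowerSeries ℚ :=
  expPS (PowerSeries.mk fun n =>
    if n = 0 then 0 else ((∑ d ∈ n.divisors, d : ℕ) : ℚ) / n)

lemma coeff_derivativeFun' (f : PowerSeries ℚ) (n : ℕ) :
    coeff (R := ℚ) n (derivativeFun f) = coeff (n + 1) f * (n + 1) :=
  coeff_derivative f n

lemma coeff_pow_eq_zero {f : PowerSeries ℚ} (hf : constantCoeff (R := ℚ) f = 0)
    {j k : ℕ} (h : j < k) : coeff (R := ℚ) j (f ^ k) = 0 := by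
  obtain ⟨g, rfl⟩ := X_dvd_iff.mpr hf
  rw [mul_pow, coeff_mul]
  apply Finset.sum_eq_zero
  rintro ⟨a, b⟩ hab
  rw [HasAntidiagonal.mem_antidiagonal] at hab
  have ha : a ≠ k := by omega
  simp [coeff_X_pow, ha]

lemma coeff_expPS {f : PowerSeries ℚ} (hf : constantCoeff (R := ℚ) f = 0) {n m : ℕ} (h : n < m) :
    coeff (R := ℚ) n (expPS f) = ∑ k ∈ Finset.range m, coeff (R := ℚ) n (f ^ k) / (Nat.factorial k : ℚ) := by
  rw [expPS, coeff_mk]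
  apply Finset.sum_subset
  · exact Finset.range_subset_range.mpr (by omega)
  · intro k hk hnk
    rw [Finset.mem_range] at hk hnk
    rw [coeff_pow_eq_zero hf (by omega)]
    simp

lemma constantCoeff_expPS {f : PowerSeries ℚ} (hf : constantCoeff (R := ℚ) f = 0) :
    constantCoeff (R := ℚ) (expPS f) = 1 := by
  rw [← coeff_zero_eq_constantCoeff, coeff_expPS hf (show 0 < 1 by omega)]
  simp

lemma derivativeFun_pow (f : PowerSeries ℚ) (k : ℕ) :
    derivativeFun (f ^ (k + 1)) = (k + 1 : ℚ) • (derivativeFun f * f ^ k) := by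
  induction k with
  | zero => simp [smul_eq_mul]
  | succ k ih =>
    rw [pow_succ, derivativeFun_mul, ih, smul_eq_C_mul, smul_eq_C_mul, smul_eq_mul, smul_eq_mul]
    push_cast [map_add, map_one]
    ring

lemma derivativeFun_expPS {f : PowerSeries ℚ} (hf : constantCoeff (R := ℚ) f = 0) :
    derivativeFun (expPS f) = derivativeFun f * expPS f := by
  ext n
  rw [coeff_derivativeFun', coeff_expPS hf (show n + 1 < n + 2 by omega)]
  have lhs_eq : (∑ k ∈ range (n + 2), coeff (R := ℚ) (n+1) (f ^ k) / (Nat.factorial k : ℚ)) * (n+1)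
      = ∑ k ∈ range (n + 1), coeff (R := ℚ) n (derivativeFun f * f ^ k) / (Nat.factorial k : ℚ) := by
    rw [Finset.sum_mul, Finset.sum_range_succ']
    have h0 : coeff (R := ℚ) (n+1) (f ^ 0) / (Nat.factorial 0 : ℚ) * (n+1) = 0 := by
      simp [coeff_one]
    rw [h0, add_zero]
    apply Finset.sum_congr rfl
    intro k _
    have hD : coeff (R := ℚ) (n+1) (f ^ (k+1)) * (n+1) = coeff (R := ℚ) n (derivativeFun (f ^ (k+1))) := by
      rw [coeff_derivativeFun']
    have : coeff (R := ℚ) (n+1) (f ^ (k+1)) / (Nat.factorial (k+1) : ℚ) * (n+1)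
        = coeff (R := ℚ) n (derivativeFun (f ^ (k+1))) / (Nat.factorial (k+1) : ℚ) := by
      rw [← hD]; ring
    rw [this, derivativeFun_pow, map_smul, Nat.factorial_succ, smul_eq_mul]
    push_cast
    have hk1 : ((k:ℚ) + 1) ≠ 0 := by positivity
    have hkf : ((Nat.factorial k : ℚ)) ≠ 0 := by
      exact_mod_cast Nat.cast_ne_zero.mpr (Nat.factorial_ne_zero k)
    field_simp
  rw [lhs_eq, coeff_mul]
  have rhs_eq : ∀ p ∈ antidiagonal n, coeff (R := ℚ) p.1 (derivativeFun f) * coeff (R := ℚ) p.2 (expPS f)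
      = ∑ k ∈ range (n + 1), coeff (R := ℚ) p.1 (derivativeFun f) * coeff (R := ℚ) p.2 (f ^ k) / (Nat.factorial k : ℚ) := by
    rintro ⟨a, b⟩ hab
    rw [HasAntidiagonal.mem_antidiagonal] at hab
    rw [coeff_expPS hf (show b < n + 1 by omega), Finset.mul_sum]
    apply Finset.sum_congr rfl
    intro k _
    ring
  rw [Finset.sum_congr rfl rhs_eq, Finset.sum_comm]
  apply Finset.sum_congr rfl
  intro k _
  rw [coeff_mul, Finset.sum_div]




def sig (n : ℕ) : ℕ := ∑ d ∈ n.divisors, d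

lemma sigma_not_eventually_periodic (ℓ T N : ℕ) (hl : ℓ.Prime) (hT : 0 < T)
    (h : ∀ n, N ≤ n → ((sig (n + T) : ℕ) : ZMod ℓ) = ((sig n : ℕ) : ZMod ℓ)) : False := by
  have hk : ∀ n, N ≤ n → ∀ k : ℕ, ((sig (n + k * T) : ℕ) : ZMod ℓ) = ((sig n : ℕ) : ZMod ℓ) := by
    intro n hn k
    induction k with
    | zero => simp
    | succ k ih =>
      have h2 : n + (k + 1) * T = (n + k * T) + T := by ring
      rw [h2, h _ (le_trans hn (Nat.le_add_right _ _))]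
      exact ih
  set e := T.factorization ℓ with he
  set u := T / ℓ ^ e with hu
  have hTeu : ℓ ^ e * u = T := Nat.ordProj_mul_ordCompl_eq_self T ℓ
  have hu0 : u ≠ 0 := (Nat.ordCompl_pos ℓ hT.ne').ne'
  obtain ⟨q, hq, hqgt, hq1⟩ := Nat.exists_prime_gt_modEq_one (k := u) (ℓ + N) hu0
  have hqne : q ≠ ℓ := by omega
  set j := max e N with hj
  have hNlj : N ≤ ℓ ^ j := by
    have h1 : j < 2 ^ j := Nat.lt_two_pow_self
    have h2 : (2:ℕ) ^ j ≤ ℓ ^ j := Nat.pow_le_pow_left hl.two_le j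
    have h3 : N ≤ j := le_max_right _ _
    omega
  have hdvd : T ∣ ℓ ^ j * q - ℓ ^ j := by
    have h1 : ℓ ^ j * q - ℓ ^ j = ℓ ^ j * (q - 1) := by
      have := hq.pos
      cases q with
      | zero => omega
      | succ q => simp [Nat.mul_succ]
    rw [h1, ← hTeu]
    exact Nat.mul_dvd_mul (pow_dvd_pow ℓ (le_max_left _ _))
      ((Nat.modEq_iff_dvd' hq.one_lt.le).mp hq1.symm)
  have hle : ℓ ^ j ≤ ℓ ^ j * q := Nat.le_mul_of_pos_right _ hq.pos
  obtain ⟨k, hkk⟩ := hdvd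
  have hn2 : ℓ ^ j * q = ℓ ^ j + k * T := by
    rw [Nat.mul_comm k T, ← hkk]; omega
  have hper := hk (ℓ ^ j) hNlj k
  rw [← hn2] at hper
  have hσpow : ((sig (ℓ ^ j) : ℕ) : ZMod ℓ) = 1 := by
    unfold sig
    rw [Nat.sum_divisors_prime_pow hl]
    push_cast
    rw [Finset.sum_range_succ']
    simp [pow_succ]
  have hcop : Nat.Coprime (ℓ ^ j) q :=
    Nat.Coprime.pow_left _ ((Nat.coprime_primes hl hq).mpr hqne.symm)
  have hσq : sig q = 1 + q := by
    unfold sig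
    rw [hq.divisors, Finset.sum_pair hq.one_lt.ne]
  have hmul : sig (ℓ ^ j * q) = sig (ℓ ^ j) * sig q := Nat.Coprime.sum_divisors_mul hcop
  have hthis : ((sig (ℓ ^ j * q) : ℕ) : ZMod ℓ) = ((1 + q : ℕ) : ZMod ℓ) := by
    rw [hmul, hσq]
    push_cast
    push_cast at hσpow
    rw [hσpow]; ring
  rw [hper, hσpow] at hthis
  have hq0 : (q : ZMod ℓ) = 0 := by
    push_cast at hthis
    linear_combination -hthis
  haveI := Fact.mk hl
  have hdq : ℓ ∣ q := (ZMod.natCast_eq_zero_iff q ℓ).mp hq0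
  exact hqne ((Nat.prime_dvd_prime_iff_eq hl hq).mp hdq).symm



lemma eventually_periodic_of_linrec {ℓ : ℕ} [Fact ℓ.Prime] (d N : ℕ) (c : ℕ → ZMod ℓ)
    (hc : c d ≠ 0) (s : ℕ → ZMod ℓ)
    (hrec : ∀ n, N ≤ n → ∑ i ∈ Finset.range (d + 1), c i * s (n + i) = 0) :
    ∃ T, 0 < T ∧ ∃ M, ∀ n, M ≤ n → s (n + T) = s n := by
  haveI : NeZero ℓ := ⟨(Fact.out (p := ℓ.Prime)).ne_zero⟩
  set w : ℕ → (Fin (d + 1) → ZMod ℓ) := fun n i => s (n + i) with hw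
  set F : (Fin (d + 1) → ZMod ℓ) → (Fin (d + 1) → ZMod ℓ) := fun v i =>
    if h : (i : ℕ) < d then v ⟨(i : ℕ) + 1, by omega⟩
    else -(c d)⁻¹ * ∑ i : Fin d, c i * v i.succ with hF
  have hstep : ∀ n, N ≤ n → w (n + 1) = F (w n) := by
    intro n hn
    funext i
    by_cases hi : (i : ℕ) < d
    · simp only [hF, hw, dif_pos hi]
      congr 1
      omega
    · have hid : (i : ℕ) = d := by omega
      simp only [hF, hw, dif_neg hi]
      have h0 := hrec (n + 1) (by omega)
      rw [Finset.sum_range_succ] at h0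
      have hS : c d * s (n + 1 + d) = -∑ i ∈ Finset.range d, c i * s (n + 1 + i) := by
        linear_combination h0
      have hsum : ∑ i : Fin d, c i * s (n + ((i : ℕ) + 1))
          = ∑ i ∈ Finset.range d, c i * s (n + 1 + i) := by
        rw [Finset.sum_range (n := d) (f := fun i => c i * s (n + 1 + i))]
        apply Finset.sum_congr rfl
        intro i _
        congr 2
        omega
      have hfin : ∀ i : Fin d, ((i.succ : Fin (d+1)) : ℕ) = (i : ℕ) + 1 := fun i => rfl
      calc s (n + 1 + (i : ℕ))
          = (c d)⁻¹ * (c d * s (n + 1 + d)) := by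
            rw [← mul_assoc, inv_mul_cancel₀ hc, one_mul, hid]
        _ = -(c d)⁻¹ * ∑ i : Fin d, c i * s (n + ((i.succ : Fin (d+1)) : ℕ)) := by
            simp only [hfin]
            rw [hS, hsum]
            ring
  have main : ∀ a b : ℕ, a < b → w (N + a) = w (N + b) →
      ∃ T, 0 < T ∧ ∃ M, ∀ n, M ≤ n → s (n + T) = s n := by
    intro a b hab heq
    refine ⟨b - a, by omega, N + a, ?_⟩
    have claim : ∀ j : ℕ, w (N + a + j) = w (N + b + j) := by
      intro j
      induction j with
      | zero => simpa using heq
      | succ j ih =>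
        have h1 : N + a + (j + 1) = (N + a + j) + 1 := by omega
        have h2 : N + b + (j + 1) = (N + b + j) + 1 := by omega
        rw [h1, h2, hstep _ (by omega), hstep _ (by omega), ih]
    intro n hn
    have hn' : n = N + a + (n - (N + a)) := by omega
    have hc2 : w n = w (N + b + (n - (N + a))) := by
      conv_lhs => rw [hn']
      exact claim _
    have h3 : N + b + (n - (N + a)) = n + (b - a) := by omega
    rw [h3] at hc2
    have h4 : ∀ m : ℕ, s m = w m ⟨0, by omega⟩ := by
      intro m
      simp [hw]
    rw [h4 n, h4 (n + (b - a)), hc2]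
  obtain ⟨k₁, k₂, hne, heq⟩ := Fintype.exists_ne_map_eq_of_card_lt
    (fun k : Fin (Fintype.card (Fin (d + 1) → ZMod ℓ) + 1) => w (N + k))
    (by simp)
  rcases hne.lt_or_gt with hlt | hlt
  · exact main k₁ k₂ (by exact_mod_cast hlt) heq
  · exact main k₂ k₁ (by exact_mod_cast hlt) heq.symm


theorem statement16 :
    ¬ ∃ p q : Polynomial ℚ, q.coeff 0 ≠ 0 ∧
      (q : PowerSeries ℚ) * theta = (p : PowerSeries ℚ) := by
  rintro ⟨p, q, hq0, hpq⟩
  set f : PowerSeries ℚ := PowerSeries.mk fun n =>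
    if n = 0 then 0 else ((∑ d ∈ n.divisors, d : ℕ) : ℚ) / n with hfdef
  have hf0 : constantCoeff (R := ℚ) f = 0 := by
    rw [← coeff_zero_eq_constantCoeff, hfdef, coeff_mk, if_pos rfl]
  have hDf : ∀ i : ℕ, coeff (R := ℚ) i (derivativeFun f) = (sig (i+1) : ℚ) := by
    intro i
    rw [coeff_derivativeFun', hfdef, coeff_mk, if_neg (Nat.succ_ne_zero i)]
    have : ((i:ℚ) + 1) ≠ 0 := by positivity
    push_cast
    field_simp [sig]
    simp [sig]
  have htheta : theta = expPS f := rfl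
  have hD : derivativeFun theta = derivativeFun f * theta := by
    rw [htheta]; exact derivativeFun_expPS hf0
  -- differentiate hpq
  have E1 : (q : PowerSeries ℚ) * (derivativeFun f * theta)
      + theta * derivativeFun (q : PowerSeries ℚ) = derivativeFun (p : PowerSeries ℚ) := by
    rw [← hD, ← hpq, derivativeFun_mul, smul_eq_mul, smul_eq_mul]
  have key : derivativeFun f * ((q : PowerSeries ℚ) * (p : PowerSeries ℚ))
      = (q : PowerSeries ℚ) * derivativeFun (p : PowerSeries ℚ)
        - derivativeFun (q : PowerSeries ℚ) * (p : PowerSeries ℚ) := by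
    linear_combination (q : PowerSeries ℚ) * E1
      - (derivativeFun f * (q : PowerSeries ℚ) + derivativeFun (q : PowerSeries ℚ)) * hpq
  set b : Polynomial ℚ := q * p with hbdef
  set a : Polynomial ℚ := q * Polynomial.derivative p - Polynomial.derivative q * p with hadef
  have key2 : derivativeFun f * (b : PowerSeries ℚ) = (a : PowerSeries ℚ) := by
    rw [hbdef, hadef]
    push_cast [Polynomial.coe_mul, Polynomial.coe_sub]
    rw [← derivativeFun_coe, ← derivativeFun_coe]
    exact key
  -- constant coefficient of b is nonzero
  have hth0 : constantCoeff (R := ℚ) theta = 1 := by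
    rw [htheta]; exact constantCoeff_expPS hf0
  have hp0 : p.coeff 0 ≠ 0 := by
    have h2 := congrArg (constantCoeff (R := ℚ)) hpq
    rw [map_mul, hth0, mul_one, ← coeff_zero_eq_constantCoeff,
      Polynomial.coeff_coe, Polynomial.coeff_coe] at h2
    rw [← h2]
    exact hq0
  have hb0 : b.coeff 0 ≠ 0 := by
    rw [hbdef, Polynomial.mul_coeff_zero]
    exact mul_ne_zero hq0 hp0
  -- extract the linear recurrence over ℚ
  set D := b.natDegree with hDdef
  have hrecQ : ∀ m : ℕ, a.natDegree + 1 ≤ m →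
      ∑ k ∈ range (D + 1), b.coeff (D - k) * (sig (m + k + 1) : ℚ) = 0 := by
    intro m hm
    have hn := congrArg (coeff (R := ℚ) (m + D)) key2
    rw [Polynomial.coeff_coe, Polynomial.coeff_eq_zero_of_natDegree_lt (by omega),
      coeff_mul, Finset.Nat.sum_antidiagonal_eq_sum_range_succ_mk] at hn
    have hzero : ∀ i ∈ range (m + D + 1), i ∉ Ico m (m + D + 1) →
        coeff (R := ℚ) i (derivativeFun f) * coeff (R := ℚ) (m + D - i) (b : PowerSeries ℚ) = 0 := by
      intro i hi hni
      rw [Finset.mem_range] at hi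
      rw [Finset.mem_Ico] at hni
      have hiD : i < m := by omega
      rw [Polynomial.coeff_coe, Polynomial.coeff_eq_zero_of_natDegree_lt (by omega), mul_zero]
    have hsub : ∑ i ∈ range (m + D + 1),
          coeff (R := ℚ) i (derivativeFun f) * coeff (R := ℚ) (m + D - i) (b : PowerSeries ℚ)
        = ∑ i ∈ Ico m (m + D + 1),
          coeff (R := ℚ) i (derivativeFun f) * coeff (R := ℚ) (m + D - i) (b : PowerSeries ℚ) := by
      refine (Finset.sum_subset ?_ hzero).symm
      intro x hx
      rw [Finset.mem_Ico] at hx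
      rw [Finset.mem_range]
      omega
    rw [hsub, Finset.sum_Ico_eq_sum_range] at hn
    have hidx : m + D + 1 - m = D + 1 := by omega
    rw [hidx] at hn
    rw [← hn]
    apply Finset.sum_congr rfl
    intro k hk
    rw [Finset.mem_range] at hk
    rw [hDf, Polynomial.coeff_coe]
    have h1 : m + D - (m + k) = D - k := by omega
    rw [h1, mul_comm]
  -- clear denominators
  set M : ℕ := ∏ k ∈ range (D + 1), (b.coeff k).den with hMdef
  have hMden : ∀ k, k ≤ D → (b.coeff (D - k)).den ∣ M := by
    intro k hk
    exact Finset.dvd_prod_of_mem _ (Finset.mem_range.mpr (by omega))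
  set c : ℕ → ℤ := fun k => (b.coeff (D - k)).num * ((M / (b.coeff (D - k)).den : ℕ) : ℤ)
    with hcdef
  have hc : ∀ k, k ≤ D → ((c k : ℤ) : ℚ) = (M : ℚ) * b.coeff (D - k) := by
    intro k hk
    have hdvd := hMden k hk
    set x : ℚ := b.coeff (D - k) with hx
    have hden : (x.den : ℚ) ≠ 0 := by exact_mod_cast x.den_ne_zero
    have hMeq : (M : ℚ) = ((M / x.den : ℕ) : ℚ) * (x.den : ℚ) := by
      exact_mod_cast (Nat.div_mul_cancel hdvd).symm
    have h := Rat.num_div_den x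
    rw [div_eq_iff hden] at h
    rw [hcdef]
    rw [Int.cast_mul, Int.cast_natCast]
    rw [h, hMeq]
    ring
  have hM0 : (M : ℚ) ≠ 0 := by
    rw [hMdef]
    push_cast
    apply Finset.prod_ne_zero_iff.mpr
    intro k _
    exact_mod_cast (b.coeff k).den_ne_zero
  have hcD : c D ≠ 0 := by
    intro h
    have := hc D le_rfl
    rw [h] at this
    simp only [Nat.sub_self, Int.cast_zero] at this
    exact hb0 (by
      have := this.symm
      rcases mul_eq_zero.mp this with h' | h'
      · exact absurd h' hM0
      · exact h')
  -- integer recurrence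
  have hrecZ : ∀ m : ℕ, a.natDegree + 1 ≤ m →
      ∑ k ∈ range (D + 1), c k * (sig (m + k + 1) : ℤ) = 0 := by
    intro m hm
    have hq : ((∑ k ∈ range (D + 1), c k * (sig (m + k + 1) : ℤ) : ℤ) : ℚ) = 0 := by
      push_cast
      have : ∀ k ∈ range (D + 1), ((c k : ℤ) : ℚ) * ((sig (m + k + 1) : ℕ) : ℚ)
          = (M : ℚ) * (b.coeff (D - k) * (sig (m + k + 1) : ℚ)) := by
        intro k hk
        rw [Finset.mem_range] at hk
        rw [hc k (by omega)]
        ring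
      rw [Finset.sum_congr rfl this, ← Finset.mul_sum, hrecQ m hm, mul_zero]
    exact_mod_cast hq
  -- choose a prime not dividing c D
  obtain ⟨ℓ, hℓge, hℓp⟩ := Nat.exists_infinite_primes ((c D).natAbs + 1)
  haveI := Fact.mk hℓp
  have hcD' : ((c D : ℤ) : ZMod ℓ) ≠ 0 := by
    intro h
    have hdvd := (ZMod.intCast_zmod_eq_zero_iff_dvd _ ℓ).mp h
    have h1 : (ℓ : ℤ) ≤ |c D| := Int.le_of_dvd (abs_pos.mpr hcD) ((dvd_abs _ _).mpr hdvd)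
    have h2 : |c D| = ((c D).natAbs : ℤ) := (Int.abs_eq_natAbs _)
    omega
  obtain ⟨T, hT, M', hper⟩ := eventually_periodic_of_linrec (ℓ := ℓ) D (a.natDegree + 1)
    (fun k => ((c k : ℤ) : ZMod ℓ)) hcD'
    (fun n => ((sig (n + 1) : ℕ) : ZMod ℓ))
    (by
      intro n hn
      have := hrecZ n hn
      have hcast : ((∑ k ∈ range (D + 1), c k * (sig (n + k + 1) : ℤ) : ℤ) : ZMod ℓ) = 0 := by
        rw [this]; simp
      push_cast at hcast ⊢
      exact hcast)
  apply sigma_not_eventually_periodic ℓ T (M' + 1) hℓp hT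
  intro n hn
  have := hper (n - 1) (by omega)
  have h1 : n - 1 + T + 1 = n + T := by omega
  have h2 : n - 1 + 1 = n := by omega
  rw [h1, h2] at this
  exact this
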